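/- arXiv:1603.06706 — 2 statements merged into one kernel-verified Lean document; each statement's English description precedes it below -/
import Mathlib

section
/- Let p be a prime, n ≥ 1, q = p^n, and let F be a finite field with q² elements. For every line ℓ of PG(2,F) (the projectivization of a 2-dimensional F-linear subspace of F³), the number of points of ℓ lying on the Hermitian curve H_q(F) is either exactly 1 or exactly q + 1. -/
open Polynomial Matrix


section Facts
variable {p n q : ℕ} {F : Type} [Field F] [Fintype F]

lemma herm_charP (hp : p.Prime) (hn : 1 ≤ n) (hq : q = p ^ n)
    (hF : Fintype.card F = q ^ 2) : CharP F p := by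
  obtain ⟨r, hr⟩ := CharP.exists F
  haveI := hr
  have hrp : r.Prime := CharP.char_is_prime F r
  obtain ⟨m, hm⟩ := FiniteField.card F r
  have hcards : r ^ (m : ℕ) = p ^ (2 * n) := by
    rw [← hm.2, hF, hq, ← pow_mul, mul_comm n 2]
  have hpr : p = r := by
    have h1 : p ∣ r ^ (m : ℕ) := hcards ▸ dvd_pow_self p (by omega : 2 * n ≠ 0)
    exact ((Nat.prime_dvd_prime_iff_eq hp hrp).mp (hp.dvd_of_dvd_pow h1))
  rwa [hpr]

lemma herm_two_le_q (hp : p.Prime) (hn : 1 ≤ n) (hq : q = p ^ n) : 2 ≤ q := by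
  subst hq
  exact Nat.one_lt_pow (by omega) hp.one_lt

/-- card of root set of a polynomial -/
lemma card_root_set_le (P : Polynomial F) (hP : P ≠ 0) :
    Nat.card {x : F // Polynomial.eval x P = 0} ≤ P.natDegree := by
  classical
  have h1 : Finset.univ.filter (fun x : F => Polynomial.eval x P = 0) = P.roots.toFinset := by
    ext x
    simp [Polynomial.mem_roots, hP, Polynomial.IsRoot.def]
  calc Nat.card {x : F // Polynomial.eval x P = 0}
      = (Finset.univ.filter (fun x : F => Polynomial.eval x P = 0)).card := by
        rw [Nat.card_eq_fintype_card, Fintype.card_subtype]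
    _ = P.roots.toFinset.card := by rw [h1]
    _ ≤ Multiset.card P.roots := Multiset.toFinset_card_le _
    _ ≤ P.natDegree := Polynomial.card_roots' P

lemma card_pow_eq_le (m : ℕ) (hm : m ≠ 0) (c : F) :
    Nat.card {s : F // s ^ m = c} ≤ m := by
  have h := card_root_set_le (F := F) (X ^ m - C c) (X_pow_sub_C_ne_zero (Nat.pos_of_ne_zero hm) c)
  rw [natDegree_X_pow_sub_C] at h
  refine le_trans (le_of_eq (Nat.card_congr (Equiv.subtypeEquivRight ?_))) h
  intro x
  simp [sub_eq_zero]

end Facts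

section Count
variable {q : ℕ} {F : Type} [Field F] [Fintype F]

lemma herm_q_sq_sub_one (hq2 : 2 ≤ q) : q ^ 2 - 1 = (q + 1) * (q - 1) := by
  obtain ⟨k, rfl⟩ : ∃ k, q = k + 2 := ⟨q - 2, by omega⟩
  have h1 : (k + 2) ^ 2 = k * k + 4 * k + 4 := by ring
  have h2 : (k + 2 + 1) * (k + 2 - 1) = k * k + 4 * k + 3 := by
    have : k + 2 - 1 = k + 1 := by omega
    rw [this]; ring
  omega

lemma key_norm (hq2 : 2 ≤ q) (hF : Fintype.card F = q ^ 2) (hqF : (q : F) = 0)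
    (c : F) (hc0 : c ≠ 0) (hc : c ^ q = c) :
    Nat.card {s : F // s ^ (q + 1) = c} = q + 1 := by
  classical
  have h1 : q ^ 2 - 1 = (q + 1) * (q - 1) := herm_q_sq_sub_one hq2
  have cardU : Fintype.card Fˣ = q ^ 2 - 1 := by rw [Fintype.card_units, hF]
  obtain ⟨g, hg⟩ := IsCyclic.exists_generator (α := Fˣ)
  have horder : orderOf g = q ^ 2 - 1 := by
    rw [orderOf_eq_card_of_forall_mem_zpowers hg, Nat.card_eq_fintype_card, cardU]
  have hdvd : (q + 1) ∣ q ^ 2 - 1 := ⟨q - 1, h1⟩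
  have hpos : 0 < q ^ 2 - 1 := by rw [h1]; exact Nat.mul_pos (by omega) (by omega)
  set ζ := g ^ ((q ^ 2 - 1) / (q + 1)) with hζdef
  have hordζ : orderOf ζ = q + 1 := by
    have := orderOf_pow_orderOf_div (x := g) (n := q + 1)
      (by rw [horder]; omega) (by rw [horder]; exact hdvd)
    rwa [horder] at this
  have hprim : IsPrimitiveRoot ((ζ : Fˣ) : F) (q + 1) := by
    rw [IsPrimitiveRoot.coe_units_iff]
    exact hordζ ▸ IsPrimitiveRoot.orderOf ζ
  -- existence of a (q+1)-th root of c
  set cᵤ := Units.mk0 c hc0 with hcu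
  obtain ⟨k, hk⟩ : ∃ k : ℕ, g ^ k = cᵤ := by
    have h := mem_powers_iff_mem_zpowers.mpr (hg cᵤ)
    exact (Submonoid.mem_powers_iff _ _).mp h
  have hc1 : c ^ (q - 1) = 1 := by
    have h2 : c ^ (q - 1) * c = 1 * c := by
      rw [← pow_succ, Nat.sub_add_cancel (by omega), hc, one_mul]
    exact mul_right_cancel₀ hc0 h2
  have hcu1 : cᵤ ^ (q - 1) = 1 := by
    ext
    rw [Units.val_pow_eq_pow_val, hcu, Units.val_mk0, hc1, Units.val_one]
  have hdvdk : (q + 1) ∣ k := by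
    have h3 : g ^ (k * (q - 1)) = 1 := by rw [pow_mul, hk, hcu1]
    have h4 : (q ^ 2 - 1) ∣ k * (q - 1) := horder ▸ orderOf_dvd_of_pow_eq_one h3
    rw [h1] at h4
    have h5 : 0 < q - 1 := by omega
    exact (Nat.mul_dvd_mul_iff_left h5).mp (by rwa [mul_comm (q-1) (q+1), mul_comm (q-1) k])
  have hex : ∃ α : F, α ^ (q + 1) = c := by
    refine ⟨((g ^ (k / (q + 1)) : Fˣ) : F), ?_⟩
    have : (g ^ (k / (q + 1))) ^ (q + 1) = cᵤ := by
      rw [← pow_mul, Nat.div_mul_cancel hdvdk, hk]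
    rw [← Units.val_pow_eq_pow_val, this, hcu, Units.val_mk0]
  -- counting the roots
  have hcard : Multiset.card (Polynomial.nthRoots (q + 1) c) = q + 1 := by
    rw [hprim.card_nthRoots, if_pos hex]
  have hsep : (X ^ (q + 1) - C c).Separable := by
    refine separable_X_pow_sub_C c ?_ hc0
    rw [Nat.cast_add, Nat.cast_one, hqF, zero_add]
    exact one_ne_zero
  have hnodup : (Polynomial.nthRoots (q + 1) c).Nodup := by
    rw [Polynomial.nthRoots]
    exact Polynomial.nodup_roots hsep
  have hfilter : Finset.univ.filter (fun s : F => s ^ (q + 1) = c)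
      = (Polynomial.nthRoots (q + 1) c).toFinset := by
    ext s
    simp [Polynomial.mem_nthRoots (by omega : 0 < q + 1)]
  rw [Nat.card_eq_fintype_card, Fintype.card_subtype, hfilter,
    Multiset.toFinset_card_of_nodup hnodup, hcard]

end Count

section Trace
variable {q : ℕ} {F : Type} [Field F] [Fintype F]

lemma card_le_one_add {P Q : F → Prop} (h : ∀ x, P x → x = 0 ∨ Q x) :
    Nat.card {x : F // P x} ≤ 1 + Nat.card {x : F // Q x} := by
  classical
  rw [Nat.card_eq_fintype_card, Nat.card_eq_fintype_card, Fintype.card_subtype,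
    Fintype.card_subtype]
  have hsub : Finset.univ.filter (fun x : F => P x)
      ⊆ insert (0 : F) (Finset.univ.filter (fun x : F => Q x)) := by
    intro x hx
    simp only [Finset.mem_filter, Finset.mem_univ, true_and] at hx
    rcases h x hx with h0 | hQ
    · simp [h0]
    · simp [hQ]
  calc (Finset.univ.filter (fun x : F => P x)).card
      ≤ (insert (0 : F) (Finset.univ.filter (fun x : F => Q x))).card :=
        Finset.card_le_card hsub
    _ ≤ (Finset.univ.filter (fun x : F => Q x)).card + 1 := Finset.card_insert_le _ _
    _ = 1 + (Finset.univ.filter (fun x : F => Q x)).card := by omega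

lemma key_trace (hq2 : 2 ≤ q) (hF : Fintype.card F = q ^ 2)
    (frob : ∀ x y : F, (x + y) ^ q = x ^ q + y ^ q) :
    Nat.card {s : F // s + s ^ q = 0} = q := by
  classical
  have hq2F : ∀ x : F, x ^ q ^ 2 = x := fun x => by rw [← hF]; exact FiniteField.pow_card x
  have hτadd : ∀ x y : F, ((x + y) + (x + y) ^ q) = (x + x ^ q) + (y + y ^ q) := by
    intro x y; rw [frob]; ring
  set τ : F →+ F := AddMonoidHom.mk' (fun s => s + s ^ q) hτadd with hτ
  have hcancel : ∀ s : F, s ≠ 0 → s ^ q = -s → s ^ (q - 1) = -1 := by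
    intro s hs hsq
    have h2 : s ^ (q - 1) * s = (-1) * s := by
      rw [← pow_succ, Nat.sub_add_cancel (by omega), hsq]; ring
    exact mul_right_cancel₀ hs h2
  have hkercard : Nat.card {s : F // s + s ^ q = 0} ≤ q := by
    have h1 := card_le_one_add (P := fun s : F => s + s ^ q = 0)
      (Q := fun s : F => s ^ (q - 1) = -1) ?_
    · have h2 := card_pow_eq_le (F := F) (q - 1) (by omega) (-1)
      omega
    · intro x hx
      by_cases hx0 : x = 0
      · exact Or.inl hx0
      · exact Or.inr (hcancel x hx0 (by linear_combination hx))
  have hrange : Nat.card τ.range ≤ q := by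
    have hsub : Nat.card τ.range ≤ Nat.card {c : F // c ^ q = c} := by
      refine Nat.card_le_card_of_injective
        (fun c => ⟨c.1, ?_⟩) (fun a b hab => Subtype.ext (by
          have := congrArg Subtype.val hab
          simpa using this))
      obtain ⟨s, hs⟩ := c.2
      have : c.1 = s + s ^ q := hs.symm
      rw [this, frob, ← pow_mul, ← pow_two, hq2F, add_comm]
    have h1 := card_le_one_add (P := fun c : F => c ^ q = c)
      (Q := fun c : F => c ^ (q - 1) = 1) ?_
    · have h2 := card_pow_eq_le (F := F) (q - 1) (by omega) (1 : F)
      omega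
    · intro c hc
      by_cases hc0 : c = 0
      · exact Or.inl hc0
      · refine Or.inr (mul_right_cancel₀ hc0 ?_)
        rw [← pow_succ, Nat.sub_add_cancel (by omega), hc, one_mul]
  have hmain : Nat.card F = Nat.card τ.range * Nat.card τ.ker := by
    rw [AddSubgroup.card_eq_card_quotient_mul_card_addSubgroup τ.ker]
    congr 1
    exact Nat.card_congr (QuotientAddGroup.quotientKerEquivRange τ).toEquiv
  have hcardF : Nat.card F = q ^ 2 := by rw [Nat.card_eq_fintype_card, hF]
  have hkereq : Nat.card {s : F // s + s ^ q = 0} = Nat.card τ.ker := by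
    refine Nat.card_congr (Equiv.subtypeEquivRight ?_)
    intro x
    rw [AddMonoidHom.mem_ker, hτ]
    rfl
  have hq0 : 0 < q := by omega
  have hklq : Nat.card τ.ker ≤ q := by rw [← hkereq]; exact hkercard
  have hqlk : q ≤ Nat.card τ.ker := by
    by_contra hlt
    push_neg at hlt
    have : Nat.card τ.range * Nat.card τ.ker < q * q := by
      calc Nat.card τ.range * Nat.card τ.ker ≤ q * Nat.card τ.ker :=
            Nat.mul_le_mul_right _ hrange
        _ < q * q := (Nat.mul_lt_mul_left hq0).mpr hlt
    rw [← hmain, hcardF, pow_two] at this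
    omega
  omega

end Trace


section Core
variable {q : ℕ} {F : Type} [Field F] [Fintype F]

lemma card_split {α : Type} [Finite α] (P Q : α → Prop) :
    Nat.card {x // P x} = Nat.card {x // P x ∧ Q x} + Nat.card {x // P x ∧ ¬ Q x} := by
  classical
  rw [← Nat.card_sum]
  refine (Nat.card_congr ?_).symm
  exact (Equiv.sumCongr (Equiv.subtypeSubtypeEquivSubtypeInter P Q).symm
    (Equiv.subtypeSubtypeEquivSubtypeInter P (fun x => ¬ Q x)).symm).trans
    (Equiv.sumCompl (fun y : {x // P x} => Q y.1))

lemma card_ne_zero (hF : Fintype.card F = q ^ 2) :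
    Nat.card {a : F // a ≠ 0} = q ^ 2 - 1 := by
  classical
  rw [← Nat.card_congr (unitsEquivNeZero (G₀ := F)), Nat.card_eq_fintype_card,
    Fintype.card_units, hF]

lemma card_affine (a : F) (ha : a ≠ 0) (b : F) (R : F → Prop) :
    Nat.card {t : F // R (a * t + b)} = Nat.card {s : F // R s} := by
  refine Nat.card_congr (Equiv.subtypeEquiv ((Equiv.mulLeft₀ a ha).trans (Equiv.addRight b)) ?_)
  intro t
  rfl

lemma card_pow_zero (hq : q ≠ 0) : Nat.card {s : F // s ^ (q + 1) = 0} = 1 := by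
  have : ∀ s : F, s ^ (q + 1) = 0 ↔ s = 0 := fun s => pow_eq_zero_iff (by omega)
  rw [Nat.card_congr (Equiv.subtypeEquivRight this), Nat.card_eq_fintype_card,
    Fintype.card_subtype_eq]
end Core

section Main
variable {q : ℕ} {F : Type} [Field F] [Fintype F]

lemma core_count_A (hq2 : 2 ≤ q) (hF : Fintype.card F = q ^ 2)
    (frob : ∀ x y : F, (x + y) ^ q = x ^ q + y ^ q)
    (hq2F : ∀ x : F, x ^ q ^ 2 = x) (hqF : (q : F) = 0)
    (A B C : F) (hA : A ^ q = A) (hC : C ^ q = C) (hAne : A ≠ 0)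
    (g : F × F → F)
    (hgdef : ∀ x : F × F, g x = A * x.1 ^ (q + 1) + B * (x.1 * x.2 ^ q)
      + B ^ q * (x.1 ^ q * x.2) + C * x.2 ^ (q + 1)) :
    Nat.card {x : F × F // x ≠ 0 ∧ g x = 0} = q ^ 2 - 1 ∨
    Nat.card {x : F × F // x ≠ 0 ∧ g x = 0} = (q + 1) * (q ^ 2 - 1) := by
  classical
  have hq0 : q ≠ 0 := by omega
  set h : F → F := fun t => A * t ^ (q + 1) + B * t + B ^ q * t ^ q + C with hh
  have hsplit := card_split (fun x : F × F => x ≠ 0 ∧ g x = 0) (fun x => x.2 = 0)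
  have hempty : Nat.card {x : F × F // (x ≠ 0 ∧ g x = 0) ∧ x.2 = 0} = 0 := by
    have : IsEmpty {x : F × F // (x ≠ 0 ∧ g x = 0) ∧ x.2 = 0} := by
      constructor
      rintro ⟨⟨a, b⟩, ⟨hx0, hgx⟩, hb⟩
      dsimp only at hb
      subst hb
      have ha : a ≠ 0 := by
        intro h0
        exact hx0 (by rw [Prod.mk_eq_zero]; exact ⟨h0, rfl⟩)
      rw [hgdef] at hgx
      dsimp only at hgx
      have hga : A * a ^ (q + 1) = 0 := by
        simpa [zero_pow hq0, zero_pow (by omega : q + 1 ≠ 0)] using hgx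
      exact (mul_ne_zero hAne (pow_ne_zero _ ha)) hga
    exact Nat.card_of_isEmpty
  have hgh : ∀ t b : F, g (t * b, b) = b ^ (q + 1) * h t := by
    intro t b
    rw [hgdef, hh]
    dsimp only
    rw [mul_pow t b q, mul_pow t b (q + 1)]
    ring
  have hb1 : Nat.card {x : F × F // (x ≠ 0 ∧ g x = 0) ∧ x.2 ≠ 0}
      = Nat.card {t : F // h t = 0} * (q ^ 2 - 1) := by
    rw [← card_ne_zero hF, ← Nat.card_prod]
    refine Nat.card_congr (Equiv.ofBijective
      (fun x => (⟨x.1.1 * x.1.2⁻¹, ?_⟩, ⟨x.1.2, x.2.2⟩)) ⟨?_, ?_⟩)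
    · obtain ⟨⟨a, b⟩, ⟨hx0, hgx⟩, hb⟩ := x
      dsimp only at hb ⊢
      have h1 := hgh (a * b⁻¹) b
      rw [inv_mul_cancel_right₀ hb] at h1
      rw [hgx] at h1
      exact ((mul_eq_zero.mp h1.symm).resolve_left (pow_ne_zero _ hb))
    · rintro ⟨⟨a, b⟩, ⟨hx0, hgx⟩, hb⟩ ⟨⟨a', b'⟩, ⟨hx0', hgx'⟩, hb'⟩ hfeq
      dsimp only at hb hb'
      simp only [Prod.mk.injEq, Subtype.mk.injEq] at hfeq
      obtain ⟨h1, h2⟩ := hfeq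
      subst h2
      have : a = a' := mul_right_cancel₀ (inv_ne_zero hb) h1
      refine Subtype.ext ?_
      show (a, b) = (a', b)
      rw [this]
    · rintro ⟨⟨t, ht⟩, ⟨b, hb⟩⟩
      refine ⟨⟨(t * b, b), ⟨?_, ?_⟩, hb⟩, ?_⟩
      · rw [Ne, Prod.mk_eq_zero]
        rintro ⟨-, h0⟩
        exact hb h0
      · rw [hgh, ht, mul_zero]
      · refine Prod.ext (Subtype.ext ?_) (Subtype.ext ?_)
        · dsimp only
          rw [mul_inv_cancel_right₀ hb]
        · rfl
  -- count of the roots of h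
  have hsub : ∀ x y : F, (x - y) ^ q = x ^ q - y ^ q := by
    intro x y
    have hfe := frob (x - y) y
    rw [sub_add_cancel] at hfe
    linear_combination - hfe
  have key : ∀ t : F, (A * t + B ^ q) ^ (q + 1) = A * h t + (B ^ (q + 1) - A * C) := by
    intro t
    have h2 : (A * t + B ^ q) ^ q = A * t ^ q + B := by
      rw [frob, mul_pow, hA, ← pow_mul, ← pow_two, hq2F]
    calc (A * t + B ^ q) ^ (q + 1) = (A * t + B ^ q) ^ q * (A * t + B ^ q) := by rw [pow_succ]
      _ = (A * t ^ q + B) * (A * t + B ^ q) := by rw [h2]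
      _ = A * h t + (B ^ (q + 1) - A * C) := by rw [hh]; dsimp only; ring
  have hroots : Nat.card {t : F // h t = 0}
      = Nat.card {s : F // s ^ (q + 1) = B ^ (q + 1) - A * C} := by
    have hiff : ∀ t : F, h t = 0 ↔ (A * t + B ^ q) ^ (q + 1) = B ^ (q + 1) - A * C := by
      intro t
      constructor
      · intro ht
        rw [key, ht, mul_zero, zero_add]
      · intro ht
        have hk := key t
        rw [ht] at hk
        have h3 : A * h t = 0 := by linear_combination - hk
        exact (mul_eq_zero.mp h3).resolve_left hAne
    rw [Nat.card_congr (Equiv.subtypeEquivRight hiff)]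
    exact card_affine A hAne (B ^ q) (fun s => s ^ (q + 1) = B ^ (q + 1) - A * C)
  have hBfix : (B ^ (q + 1)) ^ q = B ^ (q + 1) := by
    rw [← pow_mul]
    have he : (q + 1) * q = q ^ 2 + q := by ring
    rw [he, pow_add, hq2F, ← pow_succ']
  by_cases hd : B ^ (q + 1) - A * C = 0
  · left
    rw [hsplit, hempty, hb1, hroots, hd, card_pow_zero hq0, zero_add, one_mul]
  · right
    have hdfix : (B ^ (q + 1) - A * C) ^ q = B ^ (q + 1) - A * C := by
      rw [hsub, hBfix, mul_pow, hA, hC]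
    rw [hsplit, hempty, hb1, hroots, key_norm hq2 hF hqF _ hd hdfix, zero_add]


lemma core_count (hq2 : 2 ≤ q) (hF : Fintype.card F = q ^ 2)
    (frob : ∀ x y : F, (x + y) ^ q = x ^ q + y ^ q)
    (hq2F : ∀ x : F, x ^ q ^ 2 = x) (hqF : (q : F) = 0)
    (A B C : F) (hA : A ^ q = A) (hC : C ^ q = C)
    (hne : ¬(A = 0 ∧ B = 0 ∧ C = 0))
    (g : F × F → F)
    (hgdef : ∀ x : F × F, g x = A * x.1 ^ (q + 1) + B * (x.1 * x.2 ^ q)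
      + B ^ q * (x.1 ^ q * x.2) + C * x.2 ^ (q + 1)) :
    Nat.card {x : F × F // x ≠ 0 ∧ g x = 0} = q ^ 2 - 1 ∨
    Nat.card {x : F × F // x ≠ 0 ∧ g x = 0} = (q + 1) * (q ^ 2 - 1) := by
  classical
  have hq0 : q ≠ 0 := by omega
  have hBq2 : ∀ x : F, (x ^ q) ^ q = x := fun x => by rw [← pow_mul, ← pow_two, hq2F]
  by_cases hAne : A = 0
  swap
  · exact core_count_A hq2 hF frob hq2F hqF A B C hA hC hAne g hgdef
  by_cases hCne : C = 0
  swap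
  · -- swap the two coordinates and use the previous case
    set g' : F × F → F := fun x => g (x.2, x.1) with hg'
    have hgdef' : ∀ x : F × F, g' x = C * x.1 ^ (q + 1) + B ^ q * (x.1 * x.2 ^ q)
        + (B ^ q) ^ q * (x.1 ^ q * x.2) + A * x.2 ^ (q + 1) := by
      intro x
      rw [hg']
      dsimp only
      rw [hgdef, hBq2 B]
      ring
    have hcongr : Nat.card {x : F × F // x ≠ 0 ∧ g x = 0}
        = Nat.card {x : F × F // x ≠ 0 ∧ g' x = 0} := by
      refine Nat.card_congr (Equiv.subtypeEquiv (Equiv.prodComm F F) ?_)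
      intro x
      have h0 : (x.2, x.1) ≠ (0 : F × F) ↔ x ≠ 0 := by
        rw [Ne, Ne, Prod.mk_eq_zero, Prod.ext_iff]
        constructor
        · rintro h ⟨h1, h2⟩; exact h ⟨h2, h1⟩
        · rintro h ⟨h1, h2⟩; exact h ⟨h2, h1⟩
      have h1 : g' (x.2, x.1) = g x := by
        rw [hg']
      constructor
      · rintro ⟨hx0, hgx⟩
        exact ⟨h0.mpr hx0, by rw [Equiv.prodComm_apply, Prod.swap]; rw [h1, hgx]⟩
      · rintro ⟨hx0, hgx⟩
        rw [Equiv.prodComm_apply, Prod.swap] at hx0 hgx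
        exact ⟨h0.mp hx0, by rw [h1] at hgx; exact hgx⟩
    rw [hcongr]
    exact core_count_A hq2 hF frob hq2F hqF C (B ^ q) A hC hA hCne g' hgdef'
  -- now A = 0, C = 0, B ≠ 0
  have hBne : B ≠ 0 := fun hB => hne ⟨hAne, hB, hCne⟩
  subst hAne hCne
  right
  have hsplit := card_split (fun x : F × F => x ≠ 0 ∧ g x = 0) (fun x => x.2 = 0)
  have hzero : Nat.card {x : F × F // (x ≠ 0 ∧ g x = 0) ∧ x.2 = 0}
      = q ^ 2 - 1 := by
    rw [← card_ne_zero hF]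
    refine Nat.card_congr (Equiv.ofBijective (fun x => ⟨x.1.1, ?_⟩) ⟨?_, ?_⟩)
    · obtain ⟨⟨a, b⟩, ⟨hx0, hgx⟩, hb⟩ := x
      dsimp only at hb ⊢
      subst hb
      intro h0
      exact hx0 (by rw [Prod.mk_eq_zero]; exact ⟨h0, rfl⟩)
    · rintro ⟨⟨a, b⟩, ⟨hx0, hgx⟩, hb⟩ ⟨⟨a', b'⟩, ⟨hx0', hgx'⟩, hb'⟩ hfeq
      dsimp only at hb hb'
      subst hb
      subst hb'
      simp only [Subtype.mk.injEq] at hfeq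
      exact Subtype.ext (by rw [Prod.ext_iff]; exact ⟨hfeq, rfl⟩)
    · rintro ⟨a, ha⟩
      refine ⟨⟨(a, 0), ⟨?_, ?_⟩, rfl⟩, rfl⟩
      · rw [Ne, Prod.mk_eq_zero]
        rintro ⟨h1, -⟩
        exact ha h1
      · rw [hgdef]
        simp [zero_pow hq0, zero_pow (by omega : q + 1 ≠ 0)]
  have hgh : ∀ t b : F, g (t * b, b) = b ^ (q + 1) * (B * t + B ^ q * t ^ q) := by
    intro t b
    rw [hgdef]
    dsimp only
    rw [mul_pow t b q, mul_pow t b (q + 1)]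
    ring
  have hb1 : Nat.card {x : F × F // (x ≠ 0 ∧ g x = 0) ∧ x.2 ≠ 0}
      = q * (q ^ 2 - 1) := by
    rw [← card_ne_zero hF, ← key_trace hq2 hF frob, ← Nat.card_prod]
    refine Nat.card_congr (Equiv.ofBijective
      (fun x => (⟨B * (x.1.1 * x.1.2⁻¹), ?_⟩, ⟨x.1.2, x.2.2⟩)) ⟨?_, ?_⟩)
    · obtain ⟨⟨a, b⟩, ⟨hx0, hgx⟩, hb⟩ := x
      dsimp only at hb ⊢
      have h1 := hgh (a * b⁻¹) b
      rw [inv_mul_cancel_right₀ hb, hgx] at h1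
      have h2 : B * (a * b⁻¹) + B ^ q * (a * b⁻¹) ^ q = 0 :=
        ((mul_eq_zero.mp h1.symm).resolve_left (pow_ne_zero _ hb))
      rw [mul_pow]
      linear_combination h2
    · rintro ⟨⟨a, b⟩, ⟨hx0, hgx⟩, hb⟩ ⟨⟨a', b'⟩, ⟨hx0', hgx'⟩, hb'⟩ hfeq
      dsimp only at hb hb'
      simp only [Prod.mk.injEq, Subtype.mk.injEq] at hfeq
      obtain ⟨h1, h2⟩ := hfeq
      subst h2
      have h3 : a * b⁻¹ = a' * b⁻¹ := mul_left_cancel₀ hBne h1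
      have : a = a' := mul_right_cancel₀ (inv_ne_zero hb) h3
      refine Subtype.ext ?_
      show (a, b) = (a', b)
      rw [this]
    · rintro ⟨⟨s, hs⟩, ⟨b, hb⟩⟩
      refine ⟨⟨(B⁻¹ * s * b, b), ⟨?_, ?_⟩, hb⟩, ?_⟩
      · rw [Ne, Prod.mk_eq_zero]
        rintro ⟨-, h0⟩
        exact hb h0
      · have := hgh (B⁻¹ * s) b
        rw [this]
        have h4 : B * (B⁻¹ * s) + B ^ q * (B⁻¹ * s) ^ q = s + s ^ q := by
          rw [mul_pow, ← mul_assoc, mul_inv_cancel₀ hBne, one_mul, ← mul_assoc,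
            ← mul_pow, mul_inv_cancel₀ hBne, one_pow, one_mul]
        rw [h4, hs, mul_zero]
      · refine Prod.ext (Subtype.ext ?_) (Subtype.ext rfl)
        dsimp only
        rw [mul_inv_cancel_right₀ hb, ← mul_assoc, mul_inv_cancel₀ hBne, one_mul]
  rw [hsplit, hzero, hb1]
  have hm : ∀ m : ℕ, m + q * m = (q + 1) * m := fun m => by ring
  exact hm _

end Main


section Nondeg
variable {q : ℕ} {F : Type} [Field F]

lemma cross_triple (x u w : Fin 3 → F) :
    crossProduct x (crossProduct u w) = (x ⬝ᵥ w) • u - (x ⬝ᵥ u) • w := by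
  funext i
  fin_cases i <;>
    simp [cross_apply, dotProduct, Fin.sum_univ_three] <;> ring

lemma nondeg (hq0 : q ≠ 0)
    (frob : ∀ x y : F, (x + y) ^ q = x ^ q + y ^ q)
    (hqsurj : ∀ x : F, ∃ y : F, y ^ q = x)
    (u w : Fin 3 → F) (hind : LinearIndependent F ![u, w])
    (hA : u 0 ^ (q + 1) + u 1 ^ (q + 1) + u 2 ^ (q + 1) = 0)
    (hB : u 0 * w 0 ^ q + u 1 * w 1 ^ q + u 2 * w 2 ^ q = 0)
    (hB' : u 0 ^ q * w 0 + u 1 ^ q * w 1 + u 2 ^ q * w 2 = 0)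
    (hC : w 0 ^ (q + 1) + w 1 ^ (q + 1) + w 2 ^ (q + 1) = 0) : False := by
  classical
  set u' : Fin 3 → F := fun i => u i ^ q with hu'
  set w' : Fin 3 → F := fun i => w i ^ q with hw'
  -- u' and w' are linearly independent
  have hind' : LinearIndependent F ![u', w'] := by
    rw [LinearIndependent.pair_iff]
    intro s t hst
    obtain ⟨a, ha⟩ := hqsurj s
    obtain ⟨b, hb⟩ := hqsurj t
    have hzero : ∀ i, (a * u i + b * w i) ^ q = 0 := by
      intro i
      rw [frob, mul_pow, mul_pow, ha, hb]
      have := congrFun hst i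
      simpa [hu', hw'] using this
    have hcomb : a • u + b • w = 0 := by
      funext i
      have := pow_eq_zero_iff hq0 |>.mp (hzero i)
      simpa using this
    obtain ⟨ha0, hb0⟩ := LinearIndependent.pair_iff.mp hind a b hcomb
    subst ha0 hb0
    constructor
    · rw [← ha, zero_pow hq0]
    · rw [← hb, zero_pow hq0]
  -- dot products
  have hd1 : u' ⬝ᵥ u = 0 := by
    simp only [dotProduct, Fin.sum_univ_three, hu']
    calc u 0 ^ q * u 0 + u 1 ^ q * u 1 + u 2 ^ q * u 2
        = u 0 ^ (q + 1) + u 1 ^ (q + 1) + u 2 ^ (q + 1) := by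
          simp only [pow_succ]
      _ = 0 := hA
  have hd2 : u' ⬝ᵥ w = 0 := by
    simpa only [dotProduct, Fin.sum_univ_three, hu'] using hB'
  have hd3 : w' ⬝ᵥ u = 0 := by
    simp only [dotProduct, Fin.sum_univ_three, hw']
    calc w 0 ^ q * u 0 + w 1 ^ q * u 1 + w 2 ^ q * u 2
        = u 0 * w 0 ^ q + u 1 * w 1 ^ q + u 2 * w 2 ^ q := by ring
      _ = 0 := hB
  have hd4 : w' ⬝ᵥ w = 0 := by
    simp only [dotProduct, Fin.sum_univ_three, hw']
    calc w 0 ^ q * w 0 + w 1 ^ q * w 1 + w 2 ^ q * w 2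
        = w 0 ^ (q + 1) + w 1 ^ (q + 1) + w 2 ^ (q + 1) := by
          simp only [pow_succ]
      _ = 0 := hC
  set nv : Fin 3 → F := crossProduct u w with hnv
  have hn0 : nv ≠ 0 := crossProduct_ne_zero_iff_linearIndependent.mpr hind
  have hcu : crossProduct u' nv = 0 := by
    rw [hnv, cross_triple, hd2, hd1, zero_smul, zero_smul, sub_zero]
  have hcw : crossProduct w' nv = 0 := by
    rw [hnv, cross_triple, hd4, hd3, zero_smul, zero_smul, sub_zero]
  have hnu : crossProduct nv u' = 0 := by
    rw [← cross_anticomm, hcu, neg_zero]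
  have hnw : crossProduct nv w' = 0 := by
    rw [← cross_anticomm, hcw, neg_zero]
  have hmulu : ∃ a : F, a • nv = u' := by
    have h1 : ¬ LinearIndependent F ![nv, u'] := by
      intro hi
      exact (crossProduct_ne_zero_iff_linearIndependent.mpr hi) hnu
    rw [LinearIndependent.pair_iff' hn0] at h1
    push_neg at h1
    exact h1
  have hmulw : ∃ b : F, b • nv = w' := by
    have h1 : ¬ LinearIndependent F ![nv, w'] := by
      intro hi
      exact (crossProduct_ne_zero_iff_linearIndependent.mpr hi) hnw
    rw [LinearIndependent.pair_iff' hn0] at h1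
    push_neg at h1
    exact h1
  obtain ⟨a, ha⟩ := hmulu
  obtain ⟨b, hb⟩ := hmulw
  have hcomb : b • u' + (-a) • w' = 0 := by
    rw [← ha, ← hb, smul_smul, smul_smul]
    funext i
    simp [mul_comm]
  obtain ⟨hb0, ha0⟩ := LinearIndependent.pair_iff.mp hind' b (-a) hcomb
  have ha0' : a = 0 := by simpa using ha0
  subst ha0'
  rw [zero_smul] at ha
  exact (hind'.ne_zero 0) (by simpa using ha.symm)

end Nondeg

/-- Let `q = p ^ n` and `F` be a finite field with `q²` elements. Every line
of `PG(2, F)` (the projectivization of a 2-dimensional `F`-linear subspace of `F³`) meets the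
Hermitian curve `H_q(F) : x^(q+1) + y^(q+1) + t^(q+1) = 0` in either exactly `1` or exactly
`q + 1` points. -/
theorem line_meets_hermitian_curve_in_one_or_q_add_one_points
    (p n q : ℕ) (hp : p.Prime) (hn : 1 ≤ n) (hq : q = p ^ n)
    (F : Type) [Field F] [Fintype F] (hF : Fintype.card F = q ^ 2)
    (W : Submodule F (Fin 3 → F)) (hW : Module.finrank F W = 2) :
    Nat.card {P : Projectivization F (Fin 3 → F) //
        P.rep ∈ W ∧ P.rep 0 ^ (q + 1) + P.rep 1 ^ (q + 1) + P.rep 2 ^ (q + 1) = 0} = 1 ∨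
    Nat.card {P : Projectivization F (Fin 3 → F) //
        P.rep ∈ W ∧ P.rep 0 ^ (q + 1) + P.rep 1 ^ (q + 1) + P.rep 2 ^ (q + 1) = 0} = q + 1 := by
  classical
  have hq2 : 2 ≤ q := herm_two_le_q hp hn hq
  haveI hchar : CharP F p := herm_charP hp hn hq hF
  have hq0 : q ≠ 0 := by omega
  haveI hfact : Fact p.Prime := ⟨hp⟩
  have frob : ∀ x y : F, (x + y) ^ q = x ^ q + y ^ q := by
    intro x y; rw [hq]; exact add_pow_char_pow x y p n
  have hq2F : ∀ x : F, x ^ q ^ 2 = x := fun x => by rw [← hF]; exact FiniteField.pow_card x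
  have hqF : (q : F) = 0 := by
    rw [hq]
    push_cast
    rw [CharP.cast_eq_zero F p]
    exact zero_pow (by omega : n ≠ 0)
  have hsub : ∀ x y : F, (x - y) ^ q = x ^ q - y ^ q := by
    intro x y
    have hfe := frob (x - y) y
    rw [sub_add_cancel] at hfe
    linear_combination - hfe
  have hqsurj : ∀ x : F, ∃ y : F, y ^ q = x := by
    have hinj : Function.Injective (fun y : F => y ^ q) := by
      intro a b hab
      have h1 : (a - b) ^ q = 0 := by
        rw [hsub]
        dsimp only at hab
        rw [hab, sub_self]
      exact sub_eq_zero.mp ((pow_eq_zero_iff hq0).mp h1)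
    exact fun x => (Finite.injective_iff_surjective.mp hinj) x
  have hqq : ∀ x : F, (x ^ q) ^ q = x := fun x => by rw [← pow_mul, ← pow_two, hq2F]
  have norm_fix : ∀ x : F, (x ^ (q + 1)) ^ q = x ^ (q + 1) := fun x => by
    rw [← pow_mul]
    have he : (q + 1) * q = q ^ 2 + q := by ring
    rw [he, pow_add, hq2F, ← pow_succ']
  have hpos : 0 < q ^ 2 - 1 := by
    have h4 : 2 * 2 ≤ q * q := Nat.mul_le_mul hq2 hq2
    have h5 : q ^ 2 = q * q := sq q
    omega
  -- basis of W
  let b := Module.finBasisOfFinrankEq F W hW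
  set u : Fin 3 → F := ((b 0 : W) : Fin 3 → F) with hu
  set w : Fin 3 → F := ((b 1 : W) : Fin 3 → F) with hw
  have huW : u ∈ W := (b 0).2
  have hwW : w ∈ W := (b 1).2
  have hind : LinearIndependent F ![u, w] := by
    have h1 := b.linearIndependent
    have h2 := h1.map' W.subtype (Submodule.ker_subtype W)
    have h3 : (⇑(W.subtype) ∘ ⇑b) = ![u, w] := by
      funext i
      fin_cases i <;> rfl
    rwa [h3] at h2
  have hmem : ∀ v : Fin 3 → F, v ∈ W ↔ ∃ c d : F, c • u + d • w = v := by
    intro v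
    constructor
    · intro hv
      have hrepr := b.sum_repr ⟨v, hv⟩
      rw [Fin.sum_univ_two] at hrepr
      refine ⟨(b.repr ⟨v, hv⟩) 0, (b.repr ⟨v, hv⟩) 1, ?_⟩
      have h6 := congrArg (Subtype.val) hrepr
      rw [Submodule.coe_add, SetLike.val_smul, SetLike.val_smul] at h6
      exact h6
    · rintro ⟨c, d, rfl⟩
      exact W.add_mem (W.smul_mem c huW) (W.smul_mem d hwW)
  set A := u 0 ^ (q + 1) + u 1 ^ (q + 1) + u 2 ^ (q + 1) with hAdef
  set B := u 0 * w 0 ^ q + u 1 * w 1 ^ q + u 2 * w 2 ^ q with hBdef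
  set C := w 0 ^ (q + 1) + w 1 ^ (q + 1) + w 2 ^ (q + 1) with hCdef
  have hBq : B ^ q = u 0 ^ q * w 0 + u 1 ^ q * w 1 + u 2 ^ q * w 2 := by
    rw [hBdef, frob, frob, mul_pow, mul_pow, mul_pow, hqq, hqq, hqq]
  have hA : A ^ q = A := by rw [hAdef, frob, frob, norm_fix, norm_fix, norm_fix]
  have hC : C ^ q = C := by rw [hCdef, frob, frob, norm_fix, norm_fix, norm_fix]
  have hne : ¬(A = 0 ∧ B = 0 ∧ C = 0) := by
    rintro ⟨hA0, hB0, hC0⟩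
    refine nondeg hq0 frob hqsurj u w hind ?_ ?_ ?_ ?_
    · exact hA0
    · exact hB0
    · rw [← hBq, hB0, zero_pow hq0]
    · exact hC0
  have hexp : ∀ c d x y : F, (c * x + d * y) ^ (q + 1)
      = c ^ (q + 1) * x ^ (q + 1) + (c * d ^ q) * (x * y ^ q) + (c ^ q * d) * (x ^ q * y)
        + d ^ (q + 1) * y ^ (q + 1) := by
    intro c d x y
    have h1 : (c * x + d * y) ^ q = c ^ q * x ^ q + d ^ q * y ^ q := by
      rw [frob, mul_pow, mul_pow]
    calc (c * x + d * y) ^ (q + 1) = (c * x + d * y) ^ q * (c * x + d * y) := pow_succ _ _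
      _ = (c ^ q * x ^ q + d ^ q * y ^ q) * (c * x + d * y) := by rw [h1]
      _ = _ := by ring
  set g : F × F → F := fun z => (z.1 • u + z.2 • w) 0 ^ (q + 1) + (z.1 • u + z.2 • w) 1 ^ (q + 1)
    + (z.1 • u + z.2 • w) 2 ^ (q + 1) with hgset
  have hgdef : ∀ z : F × F, g z = A * z.1 ^ (q + 1) + B * (z.1 * z.2 ^ q)
      + B ^ q * (z.1 ^ q * z.2) + C * z.2 ^ (q + 1) := by
    intro z
    rw [hgset]
    dsimp only
    simp only [Pi.add_apply, Pi.smul_apply, smul_eq_mul]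
    rw [hexp z.1 z.2 (u 0) (w 0), hexp z.1 z.2 (u 1) (w 1), hexp z.1 z.2 (u 2) (w 2),
      hBq, hAdef, hBdef, hCdef]
    ring
  have hfs : ∀ (c : F) (v : Fin 3 → F), (c • v) 0 ^ (q + 1) + (c • v) 1 ^ (q + 1)
      + (c • v) 2 ^ (q + 1) = c ^ (q + 1) * (v 0 ^ (q + 1) + v 1 ^ (q + 1) + v 2 ^ (q + 1)) := by
    intro c v
    simp only [Pi.smul_apply, smul_eq_mul, mul_pow]
    ring
  -- step A : projectivization
  set PT := {P : Projectivization F (Fin 3 → F) //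
    P.rep ∈ W ∧ P.rep 0 ^ (q + 1) + P.rep 1 ^ (q + 1) + P.rep 2 ^ (q + 1) = 0} with hPT
  set VT := {v : Fin 3 → F // v ≠ 0 ∧ v ∈ W
    ∧ v 0 ^ (q + 1) + v 1 ^ (q + 1) + v 2 ^ (q + 1) = 0} with hVT
  have cardV : Nat.card VT = Nat.card PT * (q ^ 2 - 1) := by
    rw [← card_ne_zero hF, ← Nat.card_prod]
    refine (Nat.card_congr (Equiv.ofBijective
      (fun Pc : PT × {c : F // c ≠ 0} =>
        (⟨(Pc.2 : F) • Pc.1.1.rep,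
          smul_ne_zero Pc.2.2 (Projectivization.rep_nonzero _),
          W.smul_mem _ Pc.1.2.1,
          by rw [hfs, Pc.1.2.2, mul_zero]⟩ : VT)) ⟨?_, ?_⟩)).symm
    · rintro ⟨⟨P, hP⟩, ⟨c, hc⟩⟩ ⟨⟨P', hP'⟩, ⟨c', hc'⟩⟩ hxy
      simp only [Subtype.mk.injEq] at hxy
      have hne1 : c • P.rep ≠ 0 := smul_ne_zero hc (Projectivization.rep_nonzero _)
      have hne2 : c' • P'.rep ≠ 0 := smul_ne_zero hc' (Projectivization.rep_nonzero _)
      have hPP' : P = P' := by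
        calc P = Projectivization.mk F P.rep P.rep_nonzero := (Projectivization.mk_rep P).symm
          _ = Projectivization.mk F (c • P.rep) hne1 := by
              refine ((Projectivization.mk_eq_mk_iff F _ _ _ _).mpr ?_).symm
              exact ⟨Units.mk0 c hc, by simp [Units.smul_def]⟩
          _ = Projectivization.mk F (c' • P'.rep) hne2 := by
              refine (Projectivization.mk_eq_mk_iff F _ _ _ _).mpr ?_
              exact ⟨1, by simp [hxy]⟩
          _ = Projectivization.mk F P'.rep P'.rep_nonzero := by
              refine (Projectivization.mk_eq_mk_iff F _ _ _ _).mpr ?_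
              exact ⟨Units.mk0 c' hc', by simp [Units.smul_def]⟩
          _ = P' := Projectivization.mk_rep P'
      have hcc' : c = c' := by
        rw [hPP'] at hxy
        have h7 : (c - c') • P'.rep = 0 := by rw [sub_smul, hxy, sub_self]
        rcases smul_eq_zero.mp h7 with h8 | h8
        · exact sub_eq_zero.mp h8
        · exact absurd h8 (Projectivization.rep_nonzero _)
      refine Prod.ext (Subtype.ext ?_) (Subtype.ext ?_)
      · exact hPP'
      · exact hcc'
    · rintro ⟨v, hv0, hvW, hvf⟩
      obtain ⟨a, ha⟩ := Projectivization.exists_smul_eq_mk_rep F v hv0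
      have hPrep : (Projectivization.mk F v hv0).rep = (a : F) • v := by
        rw [← ha, Units.smul_def]
      have hc1 : (Projectivization.mk F v hv0).rep ∈ W := by
        rw [hPrep]; exact W.smul_mem _ hvW
      have hc2 : (Projectivization.mk F v hv0).rep 0 ^ (q + 1)
          + (Projectivization.mk F v hv0).rep 1 ^ (q + 1)
          + (Projectivization.mk F v hv0).rep 2 ^ (q + 1) = 0 := by
        rw [hPrep, hfs, hvf, mul_zero]
      refine ⟨⟨⟨Projectivization.mk F v hv0, hc1, hc2⟩, ⟨((a⁻¹ : Fˣ) : F), Units.ne_zero _⟩⟩, ?_⟩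
      refine Subtype.ext ?_
      show ((a⁻¹ : Fˣ) : F) • (Projectivization.mk F v hv0).rep = v
      rw [hPrep, smul_smul]
      have h9 : ((a⁻¹ : Fˣ) : F) * (a : F) = 1 := by
        rw [← Units.val_mul, inv_mul_cancel, Units.val_one]
      rw [h9, one_smul]
  -- step B : coordinates
  have cardVg : Nat.card VT = Nat.card {z : F × F // z ≠ 0 ∧ g z = 0} := by
    refine (Nat.card_congr (Equiv.ofBijective
      (fun z : {z : F × F // z ≠ 0 ∧ g z = 0} =>
        (⟨z.1.1 • u + z.1.2 • w,
          by
            intro h0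
            obtain ⟨h1, h2⟩ := LinearIndependent.pair_iff.mp hind z.1.1 z.1.2 h0
            exact z.2.1 (by rw [Prod.ext_iff]; exact ⟨h1, h2⟩),
          W.add_mem (W.smul_mem _ huW) (W.smul_mem _ hwW),
          z.2.2⟩ : VT)) ⟨?_, ?_⟩)).symm
    · rintro ⟨z, hz0, hzg⟩ ⟨z', hz0', hzg'⟩ heq
      simp only [Subtype.mk.injEq] at heq
      have hcomb : (z.1 - z'.1) • u + (z.2 - z'.2) • w = 0 := by
        funext i
        have h10 := congrFun heq i
        simp only [Pi.add_apply, Pi.smul_apply, smul_eq_mul, Pi.zero_apply] at h10 ⊢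
        linear_combination h10
      obtain ⟨h11, h12⟩ := LinearIndependent.pair_iff.mp hind _ _ hcomb
      refine Subtype.ext (Prod.ext ?_ ?_)
      · exact sub_eq_zero.mp h11
      · exact sub_eq_zero.mp h12
    · rintro ⟨v, hv0, hvW, hvf⟩
      obtain ⟨c, d, hcd⟩ := (hmem v).mp hvW
      have hzne : (c, d) ≠ (0 : F × F) := by
        intro h0
        rw [Prod.mk_eq_zero] at h0
        obtain ⟨h1, h2⟩ := h0
        subst h1; subst h2
        rw [zero_smul, zero_smul, add_zero] at hcd
        exact hv0 hcd.symm
      have hgz : g (c, d) = 0 := by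
        rw [hgset]
        dsimp only
        rw [hcd]
        exact hvf
      exact ⟨⟨(c, d), hzne, hgz⟩, Subtype.ext hcd⟩
  obtain hcase | hcase := core_count hq2 hF frob hq2F hqF A B C hA hC hne g hgdef
  · left
    refine Nat.eq_of_mul_eq_mul_right hpos ?_
    rw [one_mul, ← cardV, cardVg, hcase]
  · right
    refine Nat.eq_of_mul_eq_mul_right hpos ?_
    rw [← cardV, cardVg, hcase]
end

section
/- Let p be a prime, n ≥ 1, q = p^n, and let F be a finite field with q² elements. The set S = { τ_{1,b,c} : b, c ∈ F, b^{q+1} = c^q + c } is a subgroup of GL(3,F) of cardinality q³. Moreover, every element of S fixes the vector line spanned by (1, 0, 0) and maps the set of vectors (x, y, t) ∈ F³ satisfying y^{q+1} = x^q t + x t^q bijectively onto itself. -/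
/-- The matrix `τ_{1,b,c}` with rows `(1, b^q, c)`, `(0, 1, b)`, `(0, 0, 1)`. -/
def tau {F : Type} [Field F] (q : ℕ) (b c : F) : Matrix (Fin 3) (Fin 3) F :=
  !![1, b ^ q, c; 0, 1, b; 0, 0, 1]

section Aux
variable {p n q : ℕ} {F : Type} [Field F] [Fintype F]

lemma char_eq (hp : p.Prime) (hq : q = p ^ n) (hF : Fintype.card F = q ^ 2) : CharP F p := by
  have h := FiniteField.card F (ringChar F)
  obtain ⟨m, hr, hc⟩ := h
  have : ringChar F = p := by
    have h1 : ringChar F ∣ p ^ (n * 2) := by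
      have : p ^ (n * 2) = ringChar F ^ (m : ℕ) := by
        rw [pow_mul, ← hq, ← hF, hc]
      rw [this]
      exact dvd_pow_self _ (by positivity)
    exact ((Nat.prime_dvd_prime_iff_eq hr hp).mp (hr.dvd_of_dvd_pow h1))
  rw [← this]; exact ringChar.charP F

lemma frob_add (hp : p.Prime) (hq : q = p ^ n) (hF : Fintype.card F = q ^ 2) (a b : F) :
    (a + b) ^ q = a ^ q + b ^ q := by
  haveI := char_eq hp hq hF
  haveI := Fact.mk hp
  subst hq
  exact add_pow_char_pow a b p n

lemma frob_neg (hp : p.Prime) (hq : q = p ^ n) (hF : Fintype.card F = q ^ 2) (a : F) :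
    (-a) ^ q = -(a ^ q) := by
  haveI := char_eq hp hq hF
  haveI := Fact.mk hp
  subst hq
  have : (iterateFrobenius F p n) (-a) = -((iterateFrobenius F p n) a) := map_neg _ a
  simpa [iterateFrobenius_def] using this

lemma pow_qq (hF : Fintype.card F = q ^ 2) (a : F) : (a ^ q) ^ q = a := by
  rw [← pow_mul, ← sq, ← hF]; exact FiniteField.pow_card a

end Aux

section Mat
variable {p n q : ℕ} {F : Type} [Field F] [Fintype F]

lemma tau_mul (hp : p.Prime) (hq : q = p ^ n) (hF : Fintype.card F = q ^ 2) (b c b' c' : F) :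
    tau q b c * tau q b' c' = tau q (b + b') (c + b ^ q * b' + c') := by
  ext i j
  fin_cases i <;> fin_cases j <;>
    simp [tau, Matrix.mul_apply, Fin.sum_univ_three, Matrix.vecHead, Matrix.vecTail, frob_add hp hq hF] <;> ring

lemma tau_one (hq : q = p ^ n) (hn : 1 ≤ n) (hp : p.Prime) : tau q (0:F) 0 = 1 := by
  have hq0 : q ≠ 0 := by subst hq; exact pow_ne_zero n hp.pos.ne'
  ext i j
  fin_cases i <;> fin_cases j <;> simp [tau, zero_pow hq0, Matrix.one_apply, Matrix.vecHead, Matrix.vecTail]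

set_option linter.unusedSectionVars false in
lemma tau_entries (b c : F) : (tau q b c) 1 2 = b ∧ (tau q b c) 0 2 = c := by
  constructor <;> simp [tau]
end Mat

section Count
variable {p n q : ℕ} {F : Type} [Field F] [Fintype F]

lemma frob_sub (hp : p.Prime) (hq : q = p ^ n) (hF : Fintype.card F = q ^ 2) (a b : F) :
    (a - b) ^ q = a ^ q - b ^ q := by
  rw [sub_eq_add_neg, frob_add hp hq hF, frob_neg hp hq hF, sub_eq_add_neg]

lemma card_root_le (hq1 : 1 < q) (r : F) : Set.ncard {x : F | x ^ q + r * x = 0} ≤ q := by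
  classical
  set f : Polynomial F := Polynomial.X ^ q + Polynomial.C r * Polynomial.X with hf
  have hdeg : f.natDegree = q := by
    have h1 : (Polynomial.C r * Polynomial.X : Polynomial F).natDegree <
        (Polynomial.X ^ q : Polynomial F).natDegree := by
      rw [Polynomial.natDegree_X_pow]
      calc (Polynomial.C r * Polynomial.X : Polynomial F).natDegree
          ≤ (Polynomial.X : Polynomial F).natDegree := Polynomial.natDegree_C_mul_le r _
        _ = 1 := Polynomial.natDegree_X
        _ < q := hq1
    rw [hf, Polynomial.natDegree_add_eq_left_of_natDegree_lt h1, Polynomial.natDegree_X_pow]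
  have hf0 : f ≠ 0 := by
    intro h
    rw [h, Polynomial.natDegree_zero] at hdeg
    omega
  have hsub : {x : F | x ^ q + r * x = 0} ⊆ ↑f.roots.toFinset := by
    intro x hx
    simp only [Multiset.mem_toFinset, Finset.coe_sort_coe, Finset.mem_coe,
      Polynomial.mem_roots, hf0, ne_eq, not_false_eq_true, true_and, Polynomial.IsRoot, hf]
    exact (Polynomial.mem_roots hf0).mpr (by simpa [Polynomial.IsRoot, hf] using hx)
  calc Set.ncard {x : F | x ^ q + r * x = 0}
      ≤ Set.ncard (↑f.roots.toFinset : Set F) := Set.ncard_le_ncard hsub (Set.toFinite _)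
    _ = f.roots.toFinset.card := Set.ncard_coe_finset _
    _ ≤ Multiset.card f.roots := Multiset.toFinset_card_le _
    _ ≤ f.natDegree := Polynomial.card_roots' f
    _ = q := hdeg

set_option maxHeartbeats 1000000 in
lemma key_count (hp : p.Prime) (hn : 1 ≤ n) (hq : q = p ^ n) (hF : Fintype.card F = q ^ 2) :
    (∀ b : F, ∃ c : F, c ^ q + c = b ^ (q + 1)) ∧
      Nat.card {c : F // c ^ q + c = 0} = q := by
  classical
  have hq1 : 1 < q := by
    subst hq
    exact Nat.one_lt_pow (by omega) hp.one_lt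
  set T : F →+ F := AddMonoidHom.mk' (fun c => c ^ q + c)
    (by
      intro a b
      show (a + b) ^ q + (a + b) = (a ^ q + a) + (b ^ q + b)
      rw [frob_add hp hq hF]; ring) with hT
  have hkerset : (T.ker : Set F) = {x : F | x ^ q + 1 * x = 0} := by
    ext x
    simp [AddMonoidHom.mem_ker, hT]
  have hker_le : Nat.card T.ker ≤ q := by
    rw [show Nat.card T.ker = Set.ncard (T.ker : Set F) from Nat.card_coe_set_eq _,
      hkerset]
    exact card_root_le hq1 1
  have hrange_sub : (T.range : Set F) ⊆ {x : F | x ^ q + (-1) * x = 0} := by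
    rintro x ⟨c, rfl⟩
    simp only [Set.mem_setOf_eq, hT, AddMonoidHom.mk'_apply]
    rw [frob_add hp hq hF, pow_qq hF]
    ring
  have hrange_le : Nat.card T.range ≤ q := by
    rw [show Nat.card T.range = Set.ncard (T.range : Set F) from Nat.card_coe_set_eq _]
    exact le_trans (Set.ncard_le_ncard hrange_sub (Set.toFinite _)) (card_root_le hq1 (-1))
  have hcardF : Nat.card F = q * q := by
    rw [Nat.card_eq_fintype_card, hF, sq]
  have hprod : Nat.card F = Nat.card T.range * Nat.card T.ker := by
    rw [AddSubgroup.card_eq_card_quotient_mul_card_addSubgroup T.ker,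
      Nat.card_congr (QuotientAddGroup.quotientKerEquivRange T).toEquiv]
  have hkerpos : 0 < Nat.card T.ker := Nat.card_pos
  have hrangepos : 0 < Nat.card T.range := Nat.card_pos
  have hker : Nat.card T.ker = q := by nlinarith [hprod, hcardF, hker_le, hrange_le]
  have hrange : Nat.card T.range = q := by nlinarith [hprod, hcardF, hker_le, hrange_le]
  constructor
  · intro b
    have hfix : (T.range : Set F) = {x : F | x ^ q + (-1) * x = 0} := by
      apply Set.eq_of_subset_of_ncard_le hrange_sub
      calc Set.ncard {x : F | x ^ q + (-1) * x = 0} ≤ q := card_root_le hq1 (-1)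
        _ = Set.ncard (T.range : Set F) := by
          rw [show Set.ncard (T.range : Set F) = Nat.card T.range from
            (Nat.card_coe_set_eq _).symm, hrange]
    have hb : b ^ (q + 1) ∈ (T.range : Set F) := by
      rw [hfix]
      simp only [Set.mem_setOf_eq]
      have : (b ^ (q + 1)) ^ q = b ^ (q + 1) := by
        rw [pow_succ, mul_pow, pow_qq hF]; ring
      rw [this]; ring
    obtain ⟨c, hc⟩ := hb
    exact ⟨c, hc⟩
  · have h2 : {c : F | c ^ q + c = 0} = (T.ker : Set F) := by
      rw [hkerset]; ext x; simp
    rw [show Nat.card {c : F // c ^ q + c = 0} = Set.ncard {c : F | c ^ q + c = 0} from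
      Nat.card_coe_set_eq _, h2,
      show Set.ncard (T.ker : Set F) = Nat.card T.ker from (Nat.card_coe_set_eq _).symm]
    exact hker

end Count

section More
variable {p n q : ℕ} {F : Type} [Field F] [Fintype F]

lemma card_pairs (hp : p.Prime) (hn : 1 ≤ n) (hq : q = p ^ n) (hF : Fintype.card F = q ^ 2) :
    Nat.card {x : F × F // x.1 ^ (q + 1) = x.2 ^ q + x.2} = q ^ 3 := by
  obtain ⟨hex, hker⟩ := key_count hp hn hq hF
  choose c₀ hc₀ using hex
  have e : {x : F × F // x.1 ^ (q + 1) = x.2 ^ q + x.2} ≃ F × {c : F // c ^ q + c = 0} :=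
    { toFun := fun x => (x.1.1, ⟨x.1.2 - c₀ x.1.1, by
        rw [frob_sub hp hq hF]
        have h1 := x.2
        have h2 := hc₀ x.1.1
        linear_combination -h1 - h2⟩)
      invFun := fun y => ⟨(y.1, y.2.1 + c₀ y.1), by
        rw [frob_add hp hq hF]
        have h1 := y.2.2
        have h2 := hc₀ y.1
        linear_combination -h1 - h2⟩
      left_inv := fun x => by
        ext <;> simp
      right_inv := fun y => by
        ext <;> simp }
  rw [Nat.card_congr e, Nat.card_prod, hker, Nat.card_eq_fintype_card, hF]
  ring

lemma cond_mul (hp : p.Prime) (hq : q = p ^ n) (hF : Fintype.card F = q ^ 2)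
    {b c b' c' : F} (hbc : b ^ (q + 1) = c ^ q + c) (hbc' : b' ^ (q + 1) = c' ^ q + c') :
    (b + b') ^ (q + 1) = (c + b ^ q * b' + c') ^ q + (c + b ^ q * b' + c') := by
  have h1 : (c + b ^ q * b' + c') ^ q = c ^ q + b * b' ^ q + c' ^ q := by
    rw [frob_add hp hq hF, frob_add hp hq hF, mul_pow, pow_qq hF]
  have h4 := frob_add hp hq hF b b'
  rw [pow_succ] at hbc hbc' ⊢
  rw [h4, h1]
  linear_combination hbc + hbc'

lemma cond_inv (hp : p.Prime) (hq : q = p ^ n) (hF : Fintype.card F = q ^ 2)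
    {b c : F} (hbc : b ^ (q + 1) = c ^ q + c) :
    (-b) ^ (q + 1) = (b ^ (q + 1) - c) ^ q + (b ^ (q + 1) - c) := by
  have h1 : (b ^ (q + 1)) ^ q = b ^ (q + 1) := by
    rw [pow_succ, mul_pow, pow_qq hF]; ring
  have h2 : (b ^ (q + 1) - c) ^ q = (b ^ (q + 1)) ^ q - c ^ q := frob_sub hp hq hF _ _
  have h3 : (-b) ^ (q + 1) = b ^ q * b := by
    rw [pow_succ, frob_neg hp hq hF]; ring
  rw [h3, h2, h1]
  rw [pow_succ] at hbc
  linear_combination -hbc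

lemma tau_mul_inv (hp : p.Prime) (hn : 1 ≤ n) (hq : q = p ^ n) (hF : Fintype.card F = q ^ 2)
    (b c : F) : tau q b c * tau q (-b) (b ^ (q + 1) - c) = 1 := by
  rw [tau_mul hp hq hF, show b + -b = (0 : F) by ring,
    show c + b ^ q * (-b) + (b ^ (q + 1) - c) = (0 : F) by rw [pow_succ]; ring,
    tau_one hq hn hp]

lemma tau_inv_mul (hp : p.Prime) (hn : 1 ≤ n) (hq : q = p ^ n) (hF : Fintype.card F = q ^ 2)
    (b c : F) : tau q (-b) (b ^ (q + 1) - c) * tau q b c = 1 := by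
  rw [tau_mul hp hq hF, show -b + b = (0 : F) by ring,
    show (b ^ (q + 1) - c) + (-b) ^ q * b + c = (0 : F) by
      rw [frob_neg hp hq hF, pow_succ]; ring,
    tau_one hq hn hp]

lemma mulVec_tau (b c : F) (v : Fin 3 → F) :
    (tau q b c).mulVec v = ![v 0 + b ^ q * v 1 + c * v 2, v 1 + b * v 2, v 2] := by
  funext i
  fin_cases i <;>
    simp [tau, Matrix.mulVec, dotProduct, Fin.sum_univ_three, Matrix.vecHead,
      Matrix.vecTail] <;> ring

lemma curve_mapsTo (hp : p.Prime) (hq : q = p ^ n) (hF : Fintype.card F = q ^ 2)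
    {b c : F} (hbc : b ^ (q + 1) = c ^ q + c) :
    Set.MapsTo (tau q b c).mulVec
      {v : Fin 3 → F | v 1 ^ (q + 1) = v 0 ^ q * v 2 + v 0 * v 2 ^ q}
      {v : Fin 3 → F | v 1 ^ (q + 1) = v 0 ^ q * v 2 + v 0 * v 2 ^ q} := by
  intro v hv
  simp only [Set.mem_setOf_eq] at hv ⊢
  rw [mulVec_tau]
  set x := v 0
  set y := v 1
  set t := v 2
  show (y + b * t) ^ (q + 1) = (x + b ^ q * y + c * t) ^ q * t + (x + b ^ q * y + c * t) * t ^ q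
  have e1 : (y + b * t) ^ q = y ^ q + b ^ q * t ^ q := by
    rw [frob_add hp hq hF, mul_pow]
  have e2 : (x + b ^ q * y + c * t) ^ q = x ^ q + b * y ^ q + c ^ q * t ^ q := by
    rw [frob_add hp hq hF, frob_add hp hq hF, mul_pow, mul_pow, pow_qq hF]
  rw [pow_succ, e1, e2]
  rw [pow_succ] at hv hbc
  linear_combination hv + (t ^ q * t) * hbc

end More


/-- Let `q = p ^ n` and `F` be a finite field with `q²` elements. The set
`S = { τ_{1,b,c} : b, c ∈ F, b^(q+1) = c^q + c }` is a subgroup of `GL(3, F)` of cardinality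
`q³`; every element of `S` fixes the vector line spanned by `(1, 0, 0)` and maps the set of
vectors satisfying the norm-trace equation `y^(q+1) = x^q t + x t^q` bijectively onto itself. -/
theorem tau_subgroup_order_q_cubed_fixes_line_and_preserves_curve
    (p n q : ℕ) (hp : p.Prime) (hn : 1 ≤ n) (hq : q = p ^ n)
    (F : Type) [Field F] [Fintype F] (hF : Fintype.card F = q ^ 2) :
    (∃ H : Subgroup (GL (Fin 3) F),
      Units.val '' (H : Set (GL (Fin 3) F)) =
        {A : Matrix (Fin 3) (Fin 3) F | ∃ b c : F, b ^ (q + 1) = c ^ q + c ∧ A = tau q b c} ∧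
      Nat.card H = q ^ 3) ∧
    ∀ A ∈ {A : Matrix (Fin 3) (Fin 3) F | ∃ b c : F, b ^ (q + 1) = c ^ q + c ∧ A = tau q b c},
      (∀ v ∈ Submodule.span F {![(1 : F), 0, 0]},
        A.mulVec v ∈ Submodule.span F {![(1 : F), 0, 0]}) ∧
      Set.BijOn A.mulVec
        {v : Fin 3 → F | v 1 ^ (q + 1) = v 0 ^ q * v 2 + v 0 * v 2 ^ q}
        {v : Fin 3 → F | v 1 ^ (q + 1) = v 0 ^ q * v 2 + v 0 * v 2 ^ q} := by
  classical
  have hq0 : q ≠ 0 := by subst hq; exact pow_ne_zero n hp.pos.ne'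
  constructor
  · let HH : Subgroup (GL (Fin 3) F) := {
      carrier := {u : GL (Fin 3) F | ∃ b c : F, b ^ (q + 1) = c ^ q + c ∧
        (u : Matrix (Fin 3) (Fin 3) F) = tau q b c}
      mul_mem' := by
        rintro u u' ⟨b, c, hbc, hu⟩ ⟨b', c', hbc', hu'⟩
        exact ⟨b + b', c + b ^ q * b' + c', cond_mul hp hq hF hbc hbc', by
          rw [Units.val_mul, hu, hu', tau_mul hp hq hF]⟩
      one_mem' := ⟨0, 0, by rw [zero_pow hq0, zero_pow (by omega : q + 1 ≠ 0)]; ring, by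
        rw [tau_one hq hn hp, Units.val_one]⟩
      inv_mem' := by
        rintro u ⟨b, c, hbc, hu⟩
        refine ⟨-b, b ^ (q + 1) - c, cond_inv hp hq hF hbc, ?_⟩
        have h1 : (u : Matrix (Fin 3) (Fin 3) F) * tau q (-b) (b ^ (q + 1) - c) = 1 := by
          rw [hu]; exact tau_mul_inv hp hn hq hF b c
        calc (↑u⁻¹ : Matrix (Fin 3) (Fin 3) F)
            = ↑u⁻¹ * (↑u * tau q (-b) (b ^ (q + 1) - c)) := by rw [h1, mul_one]
          _ = (↑u⁻¹ * ↑u) * tau q (-b) (b ^ (q + 1) - c) := by rw [mul_assoc]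
          _ = tau q (-b) (b ^ (q + 1) - c) := by
              rw [← Units.val_mul, inv_mul_cancel, Units.val_one, one_mul] }
    have himg : Units.val '' (HH : Set (GL (Fin 3) F)) =
        {A : Matrix (Fin 3) (Fin 3) F | ∃ b c : F, b ^ (q + 1) = c ^ q + c ∧ A = tau q b c} := by
      ext A
      constructor
      · rintro ⟨u, hu, rfl⟩; exact hu
      · rintro ⟨b, c, hbc, rfl⟩
        exact ⟨⟨tau q b c, tau q (-b) (b ^ (q + 1) - c), tau_mul_inv hp hn hq hF b c,
          tau_inv_mul hp hn hq hF b c⟩, ⟨b, c, hbc, rfl⟩, rfl⟩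
    refine ⟨HH, himg, ?_⟩
    have h1 : Nat.card HH = Nat.card {A : Matrix (Fin 3) (Fin 3) F |
        ∃ b c : F, b ^ (q + 1) = c ^ q + c ∧ A = tau q b c} := by
      rw [← himg]
      exact (Nat.card_image_of_injective Units.val_injective _).symm
    rw [h1]
    let f : {x : F × F // x.1 ^ (q + 1) = x.2 ^ q + x.2} →
        {A : Matrix (Fin 3) (Fin 3) F | ∃ b c : F, b ^ (q + 1) = c ^ q + c ∧ A = tau q b c} :=
      fun x => ⟨tau q x.1.1 x.1.2, x.1.1, x.1.2, x.2, rfl⟩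
    have hfb : Function.Bijective f := by
      constructor
      · rintro ⟨⟨b, c⟩, h⟩ ⟨⟨b', c'⟩, h'⟩ hxy
        have h0 : tau q b c = tau q b' c' := congrArg Subtype.val hxy
        have hb : b = b' := by
          rw [← (tau_entries b c).1, ← (tau_entries b' c').1, h0]
        have hc : c = c' := by
          rw [← (tau_entries b c).2, ← (tau_entries b' c').2, h0]
        subst hb; subst hc; rfl
      · rintro ⟨A, b, c, hbc, rfl⟩
        exact ⟨⟨(b, c), hbc⟩, rfl⟩
    rw [← Nat.card_eq_of_bijective f hfb]
    exact card_pairs hp hn hq hF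
  · rintro A ⟨b, c, hbc, rfl⟩
    constructor
    · intro v hv
      rw [Submodule.mem_span_singleton] at hv
      obtain ⟨a, rfl⟩ := hv
      rw [Matrix.mulVec_smul]
      have he : (tau q b c).mulVec ![1, 0, 0] = ![(1 : F), 0, 0] := by
        rw [mulVec_tau]
        funext i
        fin_cases i <;> simp
      rw [he]
      exact Submodule.smul_mem _ a (Submodule.mem_span_singleton_self _)
    · refine ⟨curve_mapsTo hp hq hF hbc, ?_, ?_⟩
      · intro v _ w _ h
        have h1 := congrArg (tau q (-b) (b ^ (q + 1) - c)).mulVec h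
        rwa [Matrix.mulVec_mulVec, Matrix.mulVec_mulVec, tau_inv_mul hp hn hq hF,
          Matrix.one_mulVec, Matrix.one_mulVec] at h1
      · intro w hw
        refine ⟨(tau q (-b) (b ^ (q + 1) - c)).mulVec w,
          curve_mapsTo hp hq hF (cond_inv hp hq hF hbc) hw, ?_⟩
        rw [Matrix.mulVec_mulVec, tau_mul_inv hp hn hq hF, Matrix.one_mulVec]
end
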